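/- Every simple outerplanar graph G admits a (Δ+2, 2)-incidence coloring, where Δ is the maximum degree of G. -/

import Mathlib

/-- An incidence of `G` is a pair `(v, vw)` with `G.Adj v w`, encoded as the ordered pair
`(v, w)`.  Two incidences `(v, vw)` and `(v', v'w')` are adjacent if `v = v'`, `w = v'`
or `v = w'`.  A `(k, l)`-incidence coloring is a proper coloring of the incidences with at
most `k` colors such that for every vertex `v` at most `l` colors appear on the incoming
incidences `(u, uv)`. -/
def IsIncColoring {V : Type*} (G : SimpleGraph V) (k l : ℕ) (c : V → V → Fin k) : Prop :=
  (∀ v w v' w' : V, G.Adj v w → G.Adj v' w' → (v, w) ≠ (v', w') →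
      (v = v' ∨ w = v' ∨ v = w') → c v w ≠ c v' w') ∧
  (∀ v : V, {x : Fin k | ∃ u, G.Adj u v ∧ c u v = x}.ncard ≤ l)

/-- `G` has a `(k, l)`-incidence coloring. -/
def HasIncColoring {V : Type*} (G : SimpleGraph V) (k l : ℕ) : Prop :=
  ∃ c : V → V → Fin k, IsIncColoring G k l c

/-- A graph is outerplanar iff it has a one-page book embedding: the vertices can be placed
(injectively) on a line so that no two edges interleave. -/
def Outerplanar {V : Type*} (G : SimpleGraph V) : Prop :=
  ∃ f : V → ℝ, Function.Injective f ∧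
    ∀ a b c d : V, G.Adj a b → G.Adj c d →
      ¬(f a < f c ∧ f c < f b ∧ f b < f d)

namespace IncAux

open Classical

variable {V : Type*}

/-- remove all edges touching `R` -/
def cut (G : SimpleGraph V) (R : Set V) : SimpleGraph V where
  Adj v w := G.Adj v w ∧ v ∉ R ∧ w ∉ R
  symm := ⟨fun a b h => ⟨h.1.symm, h.2.2, h.2.1⟩⟩
  loopless := ⟨fun a h => G.loopless.irrefl a h.1⟩

lemma cut_adj {G : SimpleGraph V} {R : Set V} {v w : V} :
    (cut G R).Adj v w ↔ G.Adj v w ∧ v ∉ R ∧ w ∉ R := Iff.rfl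

lemma cut_le (G : SimpleGraph V) (R : Set V) : cut G R ≤ G := fun _ _ h => h.1

lemma outerplanar_cut {G : SimpleGraph V} (h : Outerplanar G) (R : Set V) :
    Outerplanar (cut G R) := by
  obtain ⟨f, hinj, hcr⟩ := h
  exact ⟨f, hinj, fun a b c d hab hcd => hcr a b c d hab.1 hcd.1⟩

/-- outgoing palette -/
def outS {k : ℕ} (G : SimpleGraph V) (c : V → V → Fin k) (v : V) : Set (Fin k) :=
  {x | ∃ t, G.Adj v t ∧ c v t = x}

/-- incoming palette -/
def inS {k : ℕ} (G : SimpleGraph V) (c : V → V → Fin k) (v : V) : Set (Fin k) :=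
  {x | ∃ t, G.Adj t v ∧ c t v = x}

lemma inS_eq {k : ℕ} (G : SimpleGraph V) (c : V → V → Fin k) (v : V) :
    inS G c v = {x | ∃ u, G.Adj u v ∧ c u v = x} := rfl

lemma exists_notin {k : ℕ} (s : Set (Fin k)) (h : s.ncard < k) : ∃ x, x ∉ s := by
  by_contra h'
  push_neg at h'
  have he : s = Set.univ := Set.eq_univ_of_forall h'
  rw [he, Set.ncard_univ, Nat.card_eq_fintype_card, Fintype.card_fin] at h
  omega

lemma outS_card [Fintype V] {k : ℕ} (G : SimpleGraph V) (c : V → V → Fin k) (v : V) :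
    (outS G c v).ncard ≤ (G.neighborSet v).ncard := by
  have : outS G c v = (fun t => c v t) '' (G.neighborSet v) := by
    ext x; simp [outS, SimpleGraph.neighborSet, Set.mem_image]
  rw [this]
  exact Set.ncard_image_le (Set.toFinite _)

lemma inS_card_le_deg [Fintype V] {k : ℕ} (G : SimpleGraph V) (c : V → V → Fin k) (v : V) :
    (inS G c v).ncard ≤ (G.neighborSet v).ncard := by
  have : inS G c v = (fun t => c t v) '' (G.neighborSet v) := by
    ext x
    simp only [inS, Set.mem_image, SimpleGraph.mem_neighborSet, Set.mem_setOf_eq]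
    constructor
    · rintro ⟨t, ht, rfl⟩; exact ⟨t, ht.symm, rfl⟩
    · rintro ⟨t, ht, rfl⟩; exact ⟨t, ht.symm, rfl⟩
  rw [this]
  exact Set.ncard_image_le (Set.toFinite _)

lemma good_inS {k : ℕ} {G : SimpleGraph V} {c : V → V → Fin k}
    (h : IsIncColoring G k 2 c) (v : V) : (inS G c v).ncard ≤ 2 := h.2 v

/-- neighbors of a degree-1 vertex -/
lemma nbrs_eq_single [Fintype V] {G : SimpleGraph V} {u a : V} (ha : G.Adj u a)
    (h1 : (G.neighborSet u).ncard = 1) : G.neighborSet u = {a} := by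
  have hsub : ({a} : Set V) ⊆ G.neighborSet u := by
    intro t ht; rcases ht with rfl; exact ha
  apply (Set.eq_of_subset_of_ncard_le hsub ?_ (Set.toFinite _)).symm
  simp [h1]

lemma nbrs_eq_pair [Fintype V] {G : SimpleGraph V} {u x y : V} (hx : G.Adj u x) (hy : G.Adj u y)
    (hxy : x ≠ y) (h2 : (G.neighborSet u).ncard = 2) : G.neighborSet u = {x, y} := by
  have hsub : ({x, y} : Set V) ⊆ G.neighborSet u := by
    intro t ht; rcases ht with rfl | rfl
    · exact hx
    · exact hy
  apply (Set.eq_of_subset_of_ncard_le hsub ?_ (Set.toFinite _)).symm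
  rw [h2, Set.ncard_pair hxy]

lemma cut_neighborSet [Fintype V] {G : SimpleGraph V} {R : Set V} {v : V} (hv : v ∉ R) :
    (cut G R).neighborSet v = G.neighborSet v \ R := by
  ext t
  simp only [SimpleGraph.mem_neighborSet, cut_adj, Set.mem_diff]
  tauto


/-- the properness part of an incidence coloring -/
def Proper {k : ℕ} (G : SimpleGraph V) (c : V → V → Fin k) : Prop :=
  ∀ v w v' w' : V, G.Adj v w → G.Adj v' w' → (v, w) ≠ (v', w') →
    (v = v' ∨ w = v' ∨ v = w') → c v w ≠ c v' w'

lemma mem_outS {k : ℕ} {H : SimpleGraph V} {c : V → V → Fin k} {v t : V}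
    (h : H.Adj v t) : c v t ∈ outS H c v := ⟨t, h, rfl⟩

lemma mem_inS {k : ℕ} {H : SimpleGraph V} {c : V → V → Fin k} {v t : V}
    (h : H.Adj t v) : c t v ∈ inS H c v := ⟨t, h, rfl⟩

lemma inS_outS_disj {k : ℕ} {H : SimpleGraph V} {c : V → V → Fin k}
    (hP : Proper H c) {v : V} {x : Fin k} (hin : x ∈ inS H c v) : x ∉ outS H c v := by
  obtain ⟨t, ht, rfl⟩ := hin
  rintro ⟨s, hs, hx⟩
  have hne : (t, v) ≠ (v, s) := by
    intro h; exact ht.ne (congrArg Prod.fst h)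
  exact hP t v v s ht hs hne (Or.inr (Or.inl rfl)) hx.symm

/-- extension over a degree-1 vertex -/
lemma ext1 [Fintype V] {k : ℕ} {G : SimpleGraph V} {u a : V}
    (hadj : G.Adj u a)
    (hdeg : (G.neighborSet u).ncard = 1)
    (hk : ∀ v, (G.neighborSet v).ncard + 2 ≤ k)
    (hc : HasIncColoring (cut G {u}) k 2) :
    HasIncColoring G k 2 := by
  classical
  obtain ⟨c', hc'⟩ := hc
  have P' : Proper (cut G {u}) c' := hc'.1
  have hua : u ≠ a := hadj.ne
  have hau : a ≠ u := hua.symm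
  have hnbr : G.neighborSet u = {a} := nbrs_eq_single hadj hdeg
  have hclass : ∀ v w, G.Adj v w → (v = u ∧ w = a) ∨ (v = a ∧ w = u) ∨
      ((cut G {u}).Adj v w ∧ v ≠ u ∧ w ≠ u) := by
    intro v w hvw
    by_cases hv : v = u
    · subst hv
      left
      have hmem : w ∈ G.neighborSet v := hvw
      rw [hnbr] at hmem
      exact ⟨rfl, hmem⟩
    · by_cases hw : w = u
      · subst hw
        right; left
        have hmem : v ∈ G.neighborSet w := hvw.symm
        rw [hnbr] at hmem
        exact ⟨hmem, rfl⟩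
      · right; right; exact ⟨⟨hvw, hv, hw⟩, hv, hw⟩
  -- degree bound at a in the cut graph
  have hdega : ((cut G {u}).neighborSet a).ncard + 3 ≤ k := by
    have h1 : (cut G {u}).neighborSet a = G.neighborSet a \ {u} := cut_neighborSet hau
    have h2 : u ∈ G.neighborSet a := hadj.symm
    have h3 : (G.neighborSet a \ {u}).ncard = (G.neighborSet a).ncard - 1 :=
      Set.ncard_diff_singleton_of_mem h2
    have h4 : 0 < (G.neighborSet a).ncard := (Set.ncard_pos (Set.toFinite _)).mpr ⟨u, h2⟩
    have h5 := hk a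
    rw [h1, h3]; omega
  have hOa : (outS (cut G {u}) c' a).ncard ≤ k - 3 :=
    le_trans (outS_card _ _ _) (by omega)
  -- choose q
  obtain ⟨q, hqO, hq2⟩ : ∃ q, q ∉ outS (cut G {u}) c' a ∧
      (inS (cut G {u}) c' a ∪ {q}).ncard ≤ 2 := by
    by_cases hSa : (inS (cut G {u}) c' a).Nonempty
    · obtain ⟨q, hq⟩ := hSa
      refine ⟨q, inS_outS_disj P' hq, ?_⟩
      have : inS (cut G {u}) c' a ∪ {q} = inS (cut G {u}) c' a := by
        apply Set.union_eq_self_of_subset_right; simpa using hq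
      rw [this]; exact hc'.2 a
    · obtain ⟨q, hq⟩ := exists_notin (outS (cut G {u}) c' a) (by omega)
      refine ⟨q, hq, ?_⟩
      rw [Set.not_nonempty_iff_eq_empty] at hSa
      rw [hSa, Set.empty_union]
      simp
  -- choose p
  obtain ⟨p, hp⟩ : ∃ p, p ∉ outS (cut G {u}) c' a ∪ (inS (cut G {u}) c' a ∪ {q}) := by
    apply exists_notin
    calc (outS (cut G {u}) c' a ∪ (inS (cut G {u}) c' a ∪ {q})).ncard
        ≤ (outS (cut G {u}) c' a).ncard + (inS (cut G {u}) c' a ∪ {q}).ncard :=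
          Set.ncard_union_le _ _
      _ ≤ (k - 3) + 2 := by have := hk a; omega
      _ < k := by omega
  have hpO : p ∉ outS (cut G {u}) c' a := fun h => hp (Or.inl h)
  have hpI : p ∉ inS (cut G {u}) c' a := fun h => hp (Or.inr (Or.inl h))
  have hpq : p ≠ q := fun h => hp (Or.inr (Or.inr h))
  -- define the new coloring
  set c : V → V → Fin k := fun v w => if v = u then q else if w = u then p else c' v w with hcdef
  have hcua : c u a = q := by simp [hcdef]
  have hcau : c a u = p := by simp [hcdef, hau]
  have hold : ∀ v w, v ≠ u → w ≠ u → c v w = c' v w := by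
    intro v w hv hw; simp [hcdef, hv, hw]
  refine ⟨c, ?_, ?_⟩
  · intro v w v' w' h h' hne hrel
    rcases hclass v w h with ⟨rfl, rfl⟩ | ⟨rfl, rfl⟩ | ⟨h3, hv, hw⟩ <;>
      rcases hclass v' w' h' with ⟨rfl, rfl⟩ | ⟨rfl, rfl⟩ | ⟨h3', hv', hw'⟩
    · exact absurd rfl hne
    · rw [hcua, hcau]; exact fun h => hpq h.symm
    · rw [hcua, hold _ _ hv' hw']
      rcases hrel with rfl | rfl | rfl
      · exact absurd rfl hv'
      · exact fun h => hqO (h ▸ mem_outS h3')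
      · exact absurd rfl hw'
    · rw [hcau, hcua]; exact hpq
    · exact absurd rfl hne
    · rw [hcau, hold _ _ hv' hw']
      rcases hrel with rfl | rfl | rfl
      · exact fun h => hpO (h ▸ mem_outS h3')
      · exact absurd rfl hv'
      · exact fun h => hpI (h ▸ mem_inS h3')
    · rw [hold _ _ hv hw, hcua]
      rcases hrel with rfl | rfl | rfl
      · exact absurd rfl hv
      · exact absurd rfl hw
      · exact fun h => hqO (h.symm ▸ mem_outS h3)
    · rw [hold _ _ hv hw, hcau]
      rcases hrel with rfl | rfl | rfl
      · exact fun h => hpO (h.symm ▸ mem_outS h3)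
      · exact fun h => hpI (h.symm ▸ mem_inS h3)
      · exact absurd rfl hv
    · rw [hold _ _ hv hw, hold _ _ hv' hw']
      exact P' v w v' w' h3 h3' hne hrel
  · intro v
    by_cases hv : v = u
    · subst hv
      have hset : {x : Fin k | ∃ t, G.Adj t v ∧ c t v = x} = {p} := by
        ext x
        simp only [Set.mem_setOf_eq, Set.mem_singleton_iff]
        constructor
        · rintro ⟨t, ht, rfl⟩
          have hmem : t ∈ G.neighborSet v := ht.symm
          rw [hnbr] at hmem
          rcases hmem with rfl
          exact hcau
        · rintro rfl; exact ⟨a, hadj.symm, hcau⟩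
      rw [hset]; simp
    · by_cases hva : v = a
      · subst hva
        have hset : {x : Fin k | ∃ t, G.Adj t v ∧ c t v = x} =
            inS (cut G {u}) c' v ∪ {q} := by
          ext x
          simp only [Set.mem_setOf_eq, Set.mem_union, Set.mem_singleton_iff]
          constructor
          · rintro ⟨t, ht, rfl⟩
            by_cases htu : t = u
            · subst htu; right; exact hcua
            · left
              rw [hold _ _ htu hau]
              exact mem_inS ⟨ht, htu, hau⟩
          · rintro (⟨t, ht, rfl⟩ | rfl)
            · exact ⟨t, ht.1, hold _ _ ht.2.1 ht.2.2⟩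
            · exact ⟨u, hadj, hcua⟩
        rw [hset]; exact hq2
      · have hset : {x : Fin k | ∃ t, G.Adj t v ∧ c t v = x} = inS (cut G {u}) c' v := by
          ext x
          simp only [Set.mem_setOf_eq]
          constructor
          · rintro ⟨t, ht, rfl⟩
            have htu : t ≠ u := by
              rintro rfl
              have hmem : v ∈ G.neighborSet t := ht
              rw [hnbr] at hmem
              exact hva hmem
            rw [hold _ _ htu hv]
            exact mem_inS ⟨ht, htu, hv⟩
          · rintro ⟨t, ht, rfl⟩
            exact ⟨t, ht.1, hold _ _ ht.2.1 ht.2.2⟩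
        rw [hset]; exact hc'.2 v

/-- extension over a degree-2 vertex in a triangle -/
lemma ext2 [Fintype V] {k : ℕ} {G : SimpleGraph V} {u a b : V}
    (hau : G.Adj a u) (hub : G.Adj u b) (hab : G.Adj a b)
    (hdeg : (G.neighborSet u).ncard = 2)
    (hk : ∀ v, (G.neighborSet v).ncard + 2 ≤ k)
    (hc : HasIncColoring (cut G {u}) k 2) :
    HasIncColoring G k 2 := by
  classical
  obtain ⟨c', hc'⟩ := hc
  have P' : Proper (cut G {u}) c' := hc'.1
  have hua : u ≠ a := hau.ne'
  have hub' : u ≠ b := hub.ne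
  have hanb : a ≠ b := hab.ne
  have hnbr : G.neighborSet u = {a, b} := nbrs_eq_pair hau.symm hub hanb hdeg
  have hab' : (cut G {u}).Adj a b := ⟨hab, hua.symm, hub'.symm⟩
  have hba' : (cut G {u}).Adj b a := hab'.symm
  set q := c' b a with hqdef
  set r := c' a b with hrdef
  have hqI : q ∈ inS (cut G {u}) c' a := mem_inS hba'
  have hrI : r ∈ inS (cut G {u}) c' b := mem_inS hab'
  have hqOb : q ∈ outS (cut G {u}) c' b := mem_outS hba'
  have hrOa : r ∈ outS (cut G {u}) c' a := mem_outS hab'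
  have hqO : q ∉ outS (cut G {u}) c' a := inS_outS_disj P' hqI
  have hrO : r ∉ outS (cut G {u}) c' b := inS_outS_disj P' hrI
  have hqr : q ≠ r := by
    have hne : (b, a) ≠ (a, b) := by
      intro h; exact hanb.symm (congrArg Prod.fst h)
    exact P' b a a b hba' hab' hne (Or.inr (Or.inl rfl))
  -- degree bounds
  have hdegv : ∀ v : V, G.Adj v u → ((cut G {u}).neighborSet v).ncard + 3 ≤ k := by
    intro v hv
    have h1 : (cut G {u}).neighborSet v = G.neighborSet v \ {u} := cut_neighborSet hv.ne
    have h2 : u ∈ G.neighborSet v := hv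
    have h3 : (G.neighborSet v \ {u}).ncard = (G.neighborSet v).ncard - 1 :=
      Set.ncard_diff_singleton_of_mem h2
    have h4 : 0 < (G.neighborSet v).ncard := (Set.ncard_pos (Set.toFinite _)).mpr ⟨u, h2⟩
    have h5 := hk v
    rw [h1, h3]; omega
  have hchoose : ∀ v : V, G.Adj v u →
      ∃ p, p ∉ outS (cut G {u}) c' v ∪ inS (cut G {u}) c' v := by
    intro v hv
    apply exists_notin
    calc (outS (cut G {u}) c' v ∪ inS (cut G {u}) c' v).ncard
        ≤ (outS (cut G {u}) c' v).ncard + (inS (cut G {u}) c' v).ncard :=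
          Set.ncard_union_le _ _
      _ ≤ (k - 3) + 2 := by
          have h1 := outS_card (cut G {u}) c' v
          have h2 := hc'.2 v
          have h3 := hdegv v hv
          exact Nat.add_le_add (by omega) h2
      _ < k := by have := hdegv v hv; omega
  obtain ⟨p, hp⟩ := hchoose a hau
  obtain ⟨s, hs⟩ := hchoose b hub.symm
  have hpO : p ∉ outS (cut G {u}) c' a := fun h => hp (Or.inl h)
  have hpI : p ∉ inS (cut G {u}) c' a := fun h => hp (Or.inr h)
  have hsO : s ∉ outS (cut G {u}) c' b := fun h => hs (Or.inl h)
  have hsI : s ∉ inS (cut G {u}) c' b := fun h => hs (Or.inr h)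
  have hpq : p ≠ q := fun h => hpI (h ▸ hqI)
  have hpr : p ≠ r := fun h => hpO (h ▸ hrOa)
  have hsr : s ≠ r := fun h => hsI (h ▸ hrI)
  have hsq : s ≠ q := fun h => hsO (h ▸ hqOb)
  have hclass : ∀ v w, G.Adj v w → (v = u ∧ w = a) ∨ (v = u ∧ w = b) ∨
      (v = a ∧ w = u) ∨ (v = b ∧ w = u) ∨
      ((cut G {u}).Adj v w ∧ v ≠ u ∧ w ≠ u) := by
    intro v w hvw
    by_cases hv : v = u
    · subst hv
      have hmem : w ∈ G.neighborSet v := hvw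
      rw [hnbr] at hmem
      rcases hmem with rfl | rfl
      · exact Or.inl ⟨rfl, rfl⟩
      · exact Or.inr (Or.inl ⟨rfl, rfl⟩)
    · by_cases hw : w = u
      · subst hw
        have hmem : v ∈ G.neighborSet w := hvw.symm
        rw [hnbr] at hmem
        rcases hmem with rfl | rfl
        · exact Or.inr (Or.inr (Or.inl ⟨rfl, rfl⟩))
        · exact Or.inr (Or.inr (Or.inr (Or.inl ⟨rfl, rfl⟩)))
      · exact Or.inr (Or.inr (Or.inr (Or.inr ⟨⟨hvw, hv, hw⟩, hv, hw⟩)))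
  set c : V → V → Fin k := fun v w =>
    if v = u then (if w = a then q else r)
    else if w = u then (if v = a then p else s) else c' v w with hcdef
  have hcua : c u a = q := by simp [hcdef]
  have hcub : c u b = r := by simp [hcdef, (hanb.symm : b ≠ a)]
  have hcau : c a u = p := by simp [hcdef, hua.symm]
  have hcbu : c b u = s := by simp [hcdef, hub'.symm, hanb.symm]
  have hold : ∀ v w, v ≠ u → w ≠ u → c v w = c' v w := by
    intro v w hv hw; simp [hcdef, hv, hw]
  refine ⟨c, ?_, ?_⟩
  · intro v w v' w' h h' hne hrel
    rcases hclass v w h with ⟨rfl, rfl⟩ | ⟨rfl, rfl⟩ | ⟨rfl, rfl⟩ | ⟨rfl, rfl⟩ | ⟨h3, hv, hw⟩ <;>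
      rcases hclass v' w' h' with ⟨he1, he2⟩ | ⟨he1, he2⟩ | ⟨he1, he2⟩ | ⟨he1, he2⟩ |
        ⟨h3', hv', hw'⟩ <;> try subst he1 <;> try subst he2
    -- (u,a) vs *
    · exact absurd rfl hne
    · rw [hcua, hcub]; exact hqr
    · rw [hcua, hcau]; exact fun h => hpq h.symm
    · rw [hcua, hcbu]; exact fun h => hsq h.symm
    · rw [hcua, hold _ _ hv' hw']
      rcases hrel with rfl | rfl | rfl
      · exact absurd rfl hv'
      · exact fun h => hqO (h ▸ mem_outS h3')
      · exact absurd rfl hw'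
    -- (u,b) vs *
    · rw [hcub, hcua]; exact hqr.symm
    · exact absurd rfl hne
    · rw [hcub, hcau]; exact fun h => hpr h.symm
    · rw [hcub, hcbu]; exact fun h => hsr h.symm
    · rw [hcub, hold _ _ hv' hw']
      rcases hrel with rfl | rfl | rfl
      · exact absurd rfl hv'
      · exact fun h => hrO (h ▸ mem_outS h3')
      · exact absurd rfl hw'
    -- (a,u) vs *
    · rw [hcau, hcua]; exact hpq
    · rw [hcau, hcub]; exact hpr
    · exact absurd rfl hne
    · rcases hrel with h5 | h5 | h5
      · exact absurd h5 hanb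
      · exact absurd h5 hub'
      · exact absurd h5 hua.symm
    · rw [hcau, hold _ _ hv' hw']
      rcases hrel with rfl | rfl | rfl
      · exact fun h => hpO (h ▸ mem_outS h3')
      · exact absurd rfl hv'
      · exact fun h => hpI (h ▸ mem_inS h3')
    -- (b,u) vs *
    · rw [hcbu, hcua]; exact hsq
    · rw [hcbu, hcub]; exact hsr
    · rcases hrel with h5 | h5 | h5
      · exact absurd h5 hanb.symm
      · exact absurd h5 hua
      · exact absurd h5 hub'.symm
    · exact absurd rfl hne
    · rw [hcbu, hold _ _ hv' hw']
      rcases hrel with rfl | rfl | rfl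
      · exact fun h => hsO (h ▸ mem_outS h3')
      · exact absurd rfl hv'
      · exact fun h => hsI (h ▸ mem_inS h3')
    -- old vs *
    · rw [hold _ _ hv hw, hcua]
      rcases hrel with rfl | rfl | rfl
      · exact absurd rfl hv
      · exact absurd rfl hw
      · exact fun h => hqO (h.symm ▸ mem_outS h3)
    · rw [hold _ _ hv hw, hcub]
      rcases hrel with rfl | rfl | rfl
      · exact absurd rfl hv
      · exact absurd rfl hw
      · exact fun h => hrO (h.symm ▸ mem_outS h3)
    · rw [hold _ _ hv hw, hcau]
      rcases hrel with rfl | rfl | rfl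
      · exact fun h => hpO (h.symm ▸ mem_outS h3)
      · exact fun h => hpI (h.symm ▸ mem_inS h3)
      · exact absurd rfl hv
    · rw [hold _ _ hv hw, hcbu]
      rcases hrel with rfl | rfl | rfl
      · exact fun h => hsO (h.symm ▸ mem_outS h3)
      · exact fun h => hsI (h.symm ▸ mem_inS h3)
      · exact absurd rfl hv
    · rw [hold _ _ hv hw, hold _ _ hv' hw']
      exact P' v w v' w' h3 h3' hne hrel
  · intro v
    by_cases hv : v = u
    · subst hv
      have hset : {x : Fin k | ∃ t, G.Adj t v ∧ c t v = x} ⊆ {p, s} := by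
        rintro x ⟨t, ht, rfl⟩
        have hmem : t ∈ G.neighborSet v := ht.symm
        rw [hnbr] at hmem
        rcases hmem with rfl | rfl
        · left; exact hcau
        · right; exact hcbu
      calc _ ≤ ({p, s} : Set (Fin k)).ncard := Set.ncard_le_ncard hset (Set.toFinite _)
        _ ≤ 2 := by
            apply le_trans (Set.ncard_insert_le _ _)
            simp
    · by_cases hva : v = a
      · subst hva
        have hset : {x : Fin k | ∃ t, G.Adj t v ∧ c t v = x} = inS (cut G {u}) c' v := by
          ext x
          simp only [Set.mem_setOf_eq]
          constructor
          · rintro ⟨t, ht, rfl⟩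
            by_cases htu : t = u
            · subst htu; rw [hcua]; exact hqI
            · rw [hold _ _ htu hv]; exact mem_inS ⟨ht, htu, hv⟩
          · rintro ⟨t, ht, rfl⟩
            exact ⟨t, ht.1, hold _ _ ht.2.1 ht.2.2⟩
        rw [hset]; exact hc'.2 v
      · by_cases hvb : v = b
        · subst hvb
          have hset : {x : Fin k | ∃ t, G.Adj t v ∧ c t v = x} = inS (cut G {u}) c' v := by
            ext x
            simp only [Set.mem_setOf_eq]
            constructor
            · rintro ⟨t, ht, rfl⟩
              by_cases htu : t = u
              · subst htu; rw [hcub]; exact hrI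
              · rw [hold _ _ htu hv]; exact mem_inS ⟨ht, htu, hv⟩
            · rintro ⟨t, ht, rfl⟩
              exact ⟨t, ht.1, hold _ _ ht.2.1 ht.2.2⟩
          rw [hset]; exact hc'.2 v
        · have hset : {x : Fin k | ∃ t, G.Adj t v ∧ c t v = x} = inS (cut G {u}) c' v := by
            ext x
            simp only [Set.mem_setOf_eq]
            constructor
            · rintro ⟨t, ht, rfl⟩
              have htu : t ≠ u := by
                rintro rfl
                have hmem : v ∈ G.neighborSet t := ht
                rw [hnbr] at hmem
                rcases hmem with rfl | rfl
                · exact hva rfl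
                · exact hvb rfl
              rw [hold _ _ htu hv]
              exact mem_inS ⟨ht, htu, hv⟩
            · rintro ⟨t, ht, rfl⟩
              exact ⟨t, ht.1, hold _ _ ht.2.1 ht.2.2⟩
          rw [hset]; exact hc'.2 v

/-- extension over two adjacent degree-2 vertices -/
lemma ncard3 {k : ℕ} (x y z : Fin k) : ({x, y, z} : Set (Fin k)).ncard ≤ 3 := by
  apply le_trans (Set.ncard_insert_le _ _)
  have := Set.ncard_insert_le y ({z} : Set (Fin k))
  simp only [Set.ncard_singleton] at this ⊢
  omega

lemma ncard4 {k : ℕ} (x y z w : Fin k) : ({x, y, z, w} : Set (Fin k)).ncard ≤ 4 := by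
  apply le_trans (Set.ncard_insert_le _ _)
  have := ncard3 y z w
  omega

lemma ext3 [Fintype V] {k : ℕ} {G : SimpleGraph V} {u1 u2 a b : V}
    (hau : G.Adj a u1) (h12 : G.Adj u1 u2) (hub : G.Adj u2 b)
    (hd1 : (G.neighborSet u1).ncard = 2) (hd2 : (G.neighborSet u2).ncard = 2)
    (hab : a ≠ b) (hau2 : a ≠ u2) (hbu1 : b ≠ u1)
    (hk : ∀ v, (G.neighborSet v).ncard + 2 ≤ k)
    (hc : HasIncColoring (cut G {u1, u2}) k 2) :
    HasIncColoring G k 2 := by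
  classical
  obtain ⟨c', hc'⟩ := hc
  have P' : Proper (cut G {u1, u2}) c' := hc'.1
  have hanu1 : a ≠ u1 := hau.ne
  have h12' : u1 ≠ u2 := h12.ne
  have hu2b : u2 ≠ b := hub.ne
  have hnbr1 : G.neighborSet u1 = {a, u2} := nbrs_eq_pair hau.symm h12 hau2 hd1
  have hnbr2 : G.neighborSet u2 = {u1, b} := nbrs_eq_pair h12.symm hub hbu1.symm hd2
  have haR : a ∉ ({u1, u2} : Set V) := by
    simp only [Set.mem_insert_iff, Set.mem_singleton_iff]
    push_neg
    exact ⟨hanu1, hau2⟩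
  have hbR : b ∉ ({u1, u2} : Set V) := by
    simp only [Set.mem_insert_iff, Set.mem_singleton_iff]
    push_neg
    exact ⟨hbu1, fun h => hu2b h.symm⟩
  have hanb2 : a ∉ G.neighborSet u2 := by
    rw [hnbr2]
    simp only [Set.mem_insert_iff, Set.mem_singleton_iff]
    push_neg
    exact ⟨hanu1, hab⟩
  have hbnb1 : b ∉ G.neighborSet u1 := by
    rw [hnbr1]
    simp only [Set.mem_insert_iff, Set.mem_singleton_iff]
    push_neg
    exact ⟨fun h => hab h.symm, fun h => hu2b h.symm⟩
  have hk4 : 4 ≤ k := by have := hk u1; omega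
  -- degree bounds in the cut graph
  have hdega : ((cut G {u1, u2}).neighborSet a).ncard + 3 ≤ k := by
    have h1 : (cut G {u1, u2}).neighborSet a = G.neighborSet a \ {u1} := by
      rw [cut_neighborSet haR]
      ext t
      simp only [Set.mem_diff, Set.mem_insert_iff, Set.mem_singleton_iff]
      constructor
      · rintro ⟨ht, h2⟩; exact ⟨ht, fun h => h2 (Or.inl h)⟩
      · rintro ⟨ht, h2⟩
        refine ⟨ht, fun h => ?_⟩
        rcases h with h | h
        · exact h2 h
        · subst h
          rw [SimpleGraph.mem_neighborSet] at ht
          exact hanb2 ht.symm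
    have h2 : u1 ∈ G.neighborSet a := hau
    have h3 : (G.neighborSet a \ {u1}).ncard = (G.neighborSet a).ncard - 1 :=
      Set.ncard_diff_singleton_of_mem h2
    have h4 : 0 < (G.neighborSet a).ncard := (Set.ncard_pos (Set.toFinite _)).mpr ⟨u1, h2⟩
    have h5 := hk a
    rw [h1, h3]; omega
  have hdegb : ((cut G {u1, u2}).neighborSet b).ncard + 3 ≤ k := by
    have h1 : (cut G {u1, u2}).neighborSet b = G.neighborSet b \ {u2} := by
      rw [cut_neighborSet hbR]
      ext t
      simp only [Set.mem_diff, Set.mem_insert_iff, Set.mem_singleton_iff]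
      constructor
      · rintro ⟨ht, h2⟩; exact ⟨ht, fun h => h2 (Or.inr h)⟩
      · rintro ⟨ht, h2⟩
        refine ⟨ht, fun h => ?_⟩
        rcases h with h | h
        · subst h
          rw [SimpleGraph.mem_neighborSet] at ht
          exact hbnb1 ht.symm
        · exact h2 h
    have h2 : u2 ∈ G.neighborSet b := hub.symm
    have h3 : (G.neighborSet b \ {u2}).ncard = (G.neighborSet b).ncard - 1 :=
      Set.ncard_diff_singleton_of_mem h2
    have h4 : 0 < (G.neighborSet b).ncard := (Set.ncard_pos (Set.toFinite _)).mpr ⟨u2, h2⟩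
    have h5 := hk b
    rw [h1, h3]; omega
  set Oa := outS (cut G {u1, u2}) c' a with hOadef
  set Sa := inS (cut G {u1, u2}) c' a with hSadef
  set Ob := outS (cut G {u1, u2}) c' b with hObdef
  set Sb := inS (cut G {u1, u2}) c' b with hSbdef
  have hOacard : Oa.ncard ≤ k - 3 := le_trans (outS_card _ _ _) (by omega)
  have hObcard : Ob.ncard ≤ k - 3 := le_trans (outS_card _ _ _) (by omega)
  have hSacard : Sa.ncard ≤ 2 := hc'.2 a
  have hSbcard : Sb.ncard ≤ 2 := hc'.2 b
  have hSacard' : Sa.ncard ≤ k - 3 := le_trans (inS_card_le_deg _ _ _) (by omega)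
  have hSbcard' : Sb.ncard ≤ k - 3 := le_trans (inS_card_le_deg _ _ _) (by omega)
  -- select the six colors
  obtain ⟨α, β, γ, δ, ε, ζ, L1, L2, L3, L4, L5, L6, L7, L8, L9, L10, L11, L12, L13, L14,
      L15, L16, L17⟩ :
      ∃ α β γ δ ε ζ : Fin k,
        α ∉ Oa ∧ α ∉ Sa ∧ α ≠ β ∧ α ≠ γ ∧
        β ∉ Oa ∧ (Sa ∪ {β}).ncard ≤ 2 ∧ β ≠ γ ∧ β ≠ δ ∧
        γ ≠ δ ∧ γ ≠ ε ∧ δ ≠ ε ∧ δ ≠ ζ ∧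
        ε ∉ Ob ∧ (Sb ∪ {ε}).ncard ≤ 2 ∧ ε ≠ ζ ∧
        ζ ∉ Ob ∧ ζ ∉ Sb := by
    have hchooseβ : ∀ (O S : Set (Fin k)), O.ncard ≤ k - 3 → S.ncard ≤ 2 →
        (∀ x ∈ S, x ∉ O) → ∃ β, β ∉ O ∧ (S ∪ {β}).ncard ≤ 2 := by
      intro O S hO hS hdisj
      by_cases hne : S.Nonempty
      · obtain ⟨β, hβ⟩ := hne
        refine ⟨β, hdisj β hβ, ?_⟩
        have : S ∪ {β} = S := by
          apply Set.union_eq_self_of_subset_right; simpa using hβ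
        rw [this]; exact hS
      · obtain ⟨β, hβ⟩ := exists_notin O (by omega)
        refine ⟨β, hβ, ?_⟩
        rw [Set.not_nonempty_iff_eq_empty] at hne
        rw [hne, Set.empty_union]
        simp
    have hdisja : ∀ x ∈ Sa, x ∉ Oa := fun x hx => inS_outS_disj P' hx
    have hdisjb : ∀ x ∈ Sb, x ∉ Ob := fun x hx => inS_outS_disj P' hx
    rcases Nat.lt_or_ge k 5 with hk5 | hk5
    · -- k = 4
      have hk4' : k = 4 := by omega
      have hOa1 : Oa.ncard ≤ 1 := by omega
      have hOb1 : Ob.ncard ≤ 1 := by omega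
      have hSa1 : Sa.ncard ≤ 1 := by omega
      have hSb1 : Sb.ncard ≤ 1 := by omega
      obtain ⟨β, hβ⟩ := exists_notin (Oa ∪ Sa)
        (by have := Set.ncard_union_le Oa Sa; omega)
      have hβO : β ∉ Oa := fun h => hβ (Or.inl h)
      have hβS : β ∉ Sa := fun h => hβ (Or.inr h)
      have hβ2 : (Sa ∪ {β}).ncard ≤ 2 := by
        have h6 := Set.ncard_union_le Sa ({β} : Set (Fin k))
        simp only [Set.ncard_singleton] at h6
        omega
      obtain ⟨α, hα⟩ := exists_notin (Oa ∪ (Sa ∪ {β}))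
        (by have := Set.ncard_union_le Oa (Sa ∪ {β}); omega)
      have hαO : α ∉ Oa := fun h => hα (Or.inl h)
      have hαS : α ∉ Sa := fun h => hα (Or.inr (Or.inl h))
      have hαβ : α ≠ β := fun h => hα (Or.inr (Or.inr h))
      by_cases hObα : α ∈ Ob
      · -- Case B : δ := α
        obtain ⟨ε, hε⟩ := exists_notin (Ob ∪ Sb)
          (by have := Set.ncard_union_le Ob Sb; omega)
        have hεO : ε ∉ Ob := fun h => hε (Or.inl h)
        have hε2 : (Sb ∪ {ε}).ncard ≤ 2 := by
          have h6 := Set.ncard_union_le Sb ({ε} : Set (Fin k))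
          simp only [Set.ncard_singleton] at h6
          omega
        obtain ⟨ζ, hζ⟩ := exists_notin (Ob ∪ (Sb ∪ {ε}))
          (by have := Set.ncard_union_le Ob (Sb ∪ {ε}); omega)
        have hζO : ζ ∉ Ob := fun h => hζ (Or.inl h)
        have hζS : ζ ∉ Sb := fun h => hζ (Or.inr (Or.inl h))
        have hζε : ζ ≠ ε := fun h => hζ (Or.inr (Or.inr h))
        obtain ⟨γ, hγ⟩ := exists_notin ({α, β, ε} : Set (Fin k))
          (by have := ncard3 α β ε; omega)
        have hγα : γ ≠ α := fun h => hγ (Or.inl h)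
        have hγβ : γ ≠ β := fun h => hγ (Or.inr (Or.inl h))
        have hγε : γ ≠ ε := fun h => hγ (Or.inr (Or.inr h))
        exact ⟨α, β, γ, α, ε, ζ, hαO, hαS, hαβ, hγα.symm, hβO, hβ2, hγβ.symm, hαβ.symm,
          hγα, hγε, fun h => hεO (h ▸ hObα), fun h => hζO (h ▸ hObα), hεO, hε2,
          hζε.symm, hζO, hζS⟩
      · -- Case A : ε := α
        have hα2 : (Sb ∪ {α}).ncard ≤ 2 := by
          have h6 := Set.ncard_union_le Sb ({α} : Set (Fin k))
          simp only [Set.ncard_singleton] at h6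
          omega
        obtain ⟨ζ, hζ⟩ := exists_notin (Ob ∪ (Sb ∪ {α}))
          (by have := Set.ncard_union_le Ob (Sb ∪ {α}); omega)
        have hζO : ζ ∉ Ob := fun h => hζ (Or.inl h)
        have hζS : ζ ∉ Sb := fun h => hζ (Or.inr (Or.inl h))
        have hζα : ζ ≠ α := fun h => hζ (Or.inr (Or.inr h))
        obtain ⟨δ, hδ⟩ := exists_notin ({β, α, ζ} : Set (Fin k))
          (by have := ncard3 β α ζ; omega)
        have hδβ : δ ≠ β := fun h => hδ (Or.inl h)
        have hδα : δ ≠ α := fun h => hδ (Or.inr (Or.inl h))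
        have hδζ : δ ≠ ζ := fun h => hδ (Or.inr (Or.inr h))
        obtain ⟨γ, hγ⟩ := exists_notin ({α, β, δ} : Set (Fin k))
          (by have := ncard3 α β δ; omega)
        have hγα : γ ≠ α := fun h => hγ (Or.inl h)
        have hγβ : γ ≠ β := fun h => hγ (Or.inr (Or.inl h))
        have hγδ : γ ≠ δ := fun h => hγ (Or.inr (Or.inr h))
        exact ⟨α, β, γ, δ, α, ζ, hαO, hαS, hαβ, hγα.symm, hβO, hβ2, hγβ.symm, hδβ.symm,
          hγδ, hγα, hδα, hδζ, hObα, hα2, hζα.symm, hζO, hζS⟩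
    · -- k ≥ 5
      obtain ⟨β, hβO, hβ2⟩ := hchooseβ Oa Sa hOacard hSacard hdisja
      obtain ⟨ε, hεO, hε2⟩ := hchooseβ Ob Sb hObcard hSbcard hdisjb
      obtain ⟨ζ, hζ⟩ := exists_notin (Ob ∪ (Sb ∪ {ε}))
        (by have := Set.ncard_union_le Ob (Sb ∪ {ε}); omega)
      have hζO : ζ ∉ Ob := fun h => hζ (Or.inl h)
      have hζS : ζ ∉ Sb := fun h => hζ (Or.inr (Or.inl h))
      have hζε : ζ ≠ ε := fun h => hζ (Or.inr (Or.inr h))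
      obtain ⟨α, hα⟩ := exists_notin (Oa ∪ (Sa ∪ {β}))
        (by have := Set.ncard_union_le Oa (Sa ∪ {β}); omega)
      have hαO : α ∉ Oa := fun h => hα (Or.inl h)
      have hαS : α ∉ Sa := fun h => hα (Or.inr (Or.inl h))
      have hαβ : α ≠ β := fun h => hα (Or.inr (Or.inr h))
      obtain ⟨δ, hδ⟩ := exists_notin ({β, ε, ζ} : Set (Fin k))
        (by have := ncard3 β ε ζ; omega)
      have hδβ : δ ≠ β := fun h => hδ (Or.inl h)
      have hδε : δ ≠ ε := fun h => hδ (Or.inr (Or.inl h))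
      have hδζ : δ ≠ ζ := fun h => hδ (Or.inr (Or.inr h))
      obtain ⟨γ, hγ⟩ := exists_notin ({α, β, δ, ε} : Set (Fin k))
        (by have := ncard4 α β δ ε; omega)
      have hγα : γ ≠ α := fun h => hγ (Or.inl h)
      have hγβ : γ ≠ β := fun h => hγ (Or.inr (Or.inl h))
      have hγδ : γ ≠ δ := fun h => hγ (Or.inr (Or.inr (Or.inl h)))
      have hγε : γ ≠ ε := fun h => hγ (Or.inr (Or.inr (Or.inr h)))
      exact ⟨α, β, γ, δ, ε, ζ, hαO, hαS, hαβ, hγα.symm, hβO, hβ2, hγβ.symm, hδβ.symm,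
        hγδ, hγε, hδε, hδζ, hεO, hε2, hζε.symm, hζO, hζS⟩
  -- define the coloring
  set c : V → V → Fin k := fun v w =>
    if v = u1 then (if w = a then β else γ)
    else if v = u2 then (if w = u1 then δ else ε)
    else if w = u1 then α
    else if w = u2 then ζ
    else c' v w with hcdef
  have hcau1 : c a u1 = α := by simp [hcdef, hanu1, hau2]
  have hcu1a : c u1 a = β := by simp [hcdef]
  have hcu1u2 : c u1 u2 = γ := by simp [hcdef, (hau2.symm : u2 ≠ a)]
  have hcu2u1 : c u2 u1 = δ := by simp [hcdef, (h12'.symm : u2 ≠ u1)]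
  have hcu2b : c u2 b = ε := by simp [hcdef, (h12'.symm : u2 ≠ u1), (hbu1 : b ≠ u1)]
  have hcbu2 : c b u2 = ζ := by
    simp [hcdef, (hbu1 : b ≠ u1), (hu2b.symm : b ≠ u2), (h12'.symm : u2 ≠ u1)]
  have hold : ∀ v w, v ≠ u1 → v ≠ u2 → w ≠ u1 → w ≠ u2 → c v w = c' v w := by
    intro v w h1 h2 h3 h4; simp [hcdef, h1, h2, h3, h4]
  have hclass : ∀ v w, G.Adj v w →
      (v = a ∧ w = u1) ∨ (v = u1 ∧ w = a) ∨ (v = u1 ∧ w = u2) ∨ (v = u2 ∧ w = u1) ∨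
      (v = u2 ∧ w = b) ∨ (v = b ∧ w = u2) ∨
      ((cut G {u1, u2}).Adj v w ∧ v ≠ u1 ∧ v ≠ u2 ∧ w ≠ u1 ∧ w ≠ u2) := by
    intro v w hvw
    by_cases hv1 : v = u1
    · subst hv1
      have hmem : w ∈ G.neighborSet v := hvw
      rw [hnbr1] at hmem
      rcases hmem with rfl | rfl
      · exact Or.inr (Or.inl ⟨rfl, rfl⟩)
      · exact Or.inr (Or.inr (Or.inl ⟨rfl, rfl⟩))
    · by_cases hv2 : v = u2
      · subst hv2
        have hmem : w ∈ G.neighborSet v := hvw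
        rw [hnbr2] at hmem
        rcases hmem with rfl | rfl
        · exact Or.inr (Or.inr (Or.inr (Or.inl ⟨rfl, rfl⟩)))
        · exact Or.inr (Or.inr (Or.inr (Or.inr (Or.inl ⟨rfl, rfl⟩))))
      · by_cases hw1 : w = u1
        · subst hw1
          have hmem : v ∈ G.neighborSet w := hvw.symm
          rw [hnbr1] at hmem
          rcases hmem with rfl | rfl
          · exact Or.inl ⟨rfl, rfl⟩
          · exact absurd rfl hv2
        · by_cases hw2 : w = u2
          · subst hw2
            have hmem : v ∈ G.neighborSet w := hvw.symm
            rw [hnbr2] at hmem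
            rcases hmem with rfl | rfl
            · exact absurd rfl hv1
            · exact Or.inr (Or.inr (Or.inr (Or.inr (Or.inr (Or.inl ⟨rfl, rfl⟩)))))
          · refine Or.inr (Or.inr (Or.inr (Or.inr (Or.inr (Or.inr
              ⟨⟨hvw, ?_, ?_⟩, hv1, hv2, hw1, hw2⟩)))))
            · intro h; rcases h with h | h
              · exact hv1 h
              · exact hv2 h
            · intro h; rcases h with h | h
              · exact hw1 h
              · exact hw2 h
  refine ⟨c, ?_, ?_⟩
  · intro v w v' w' h h' hne hrel
    rcases hclass v w h with ⟨rfl, rfl⟩ | ⟨rfl, rfl⟩ | ⟨rfl, rfl⟩ | ⟨rfl, rfl⟩ |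
      ⟨rfl, rfl⟩ | ⟨rfl, rfl⟩ | ⟨h3, hv1, hv2, hw1, hw2⟩ <;>
      rcases hclass v' w' h' with ⟨he1, he2⟩ | ⟨he1, he2⟩ | ⟨he1, he2⟩ | ⟨he1, he2⟩ |
        ⟨he1, he2⟩ | ⟨he1, he2⟩ | ⟨h3', hv1', hv2', hw1', hw2'⟩
    -- (a,u1) vs *
    · exact absurd (Prod.ext he1.symm he2.symm) hne
    · rw [he1, he2] at hrel ⊢
      rw [hcau1, hcu1a]; exact L3
    · rw [he1, he2] at hrel ⊢
      rw [hcau1, hcu1u2]; exact L4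
    · rw [he1, he2] at hrel
      rcases hrel with h5 | h5 | h5
      · exact absurd h5 hau2
      · exact absurd h5 h12'
      · exact absurd h5 hanu1
    · rw [he1, he2] at hrel
      rcases hrel with h5 | h5 | h5
      · exact absurd h5 hau2
      · exact absurd h5 h12'
      · exact absurd h5 hab
    · rw [he1, he2] at hrel
      rcases hrel with h5 | h5 | h5
      · exact absurd h5 hab
      · exact absurd h5 hbu1.symm
      · exact absurd h5 hau2
    · rw [hcau1, hold _ _ hv1' hv2' hw1' hw2']
      rcases hrel with h5 | h5 | h5
      · exact fun h => L1 (by rw [hOadef, h5]; exact h ▸ mem_outS h3')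
      · exact absurd h5.symm hv1'
      · exact fun h => L2 (by rw [hSadef, h5]; exact h ▸ mem_inS h3')
    -- (u1,a) vs *
    · rw [he1, he2] at hrel ⊢
      rw [hcu1a, hcau1]; exact L3.symm
    · exact absurd (Prod.ext he1.symm he2.symm) hne
    · rw [he1, he2] at hrel ⊢
      rw [hcu1a, hcu1u2]; exact L7
    · rw [he1, he2] at hrel ⊢
      rw [hcu1a, hcu2u1]; exact L8
    · rw [he1, he2] at hrel
      rcases hrel with h5 | h5 | h5
      · exact absurd h5 h12'
      · exact absurd h5 hau2
      · exact absurd h5 hbu1.symm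
    · rw [he1, he2] at hrel
      rcases hrel with h5 | h5 | h5
      · exact absurd h5 hbu1.symm
      · exact absurd h5 hab
      · exact absurd h5 h12'
    · rw [hcu1a, hold _ _ hv1' hv2' hw1' hw2']
      rcases hrel with rfl | rfl | rfl
      · exact absurd rfl hv1'
      · exact fun h => L5 (h ▸ mem_outS h3')
      · exact absurd rfl hw1'
    -- (u1,u2) vs *
    · rw [he1, he2] at hrel ⊢
      rw [hcu1u2, hcau1]; exact L4.symm
    · rw [he1, he2] at hrel ⊢
      rw [hcu1u2, hcu1a]; exact L7.symm
    · exact absurd (Prod.ext he1.symm he2.symm) hne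
    · rw [he1, he2] at hrel ⊢
      rw [hcu1u2, hcu2u1]; exact L9
    · rw [he1, he2] at hrel ⊢
      rw [hcu1u2, hcu2b]; exact L10
    · rw [he1, he2] at hrel
      rcases hrel with h5 | h5 | h5
      · exact absurd h5 hbu1.symm
      · exact absurd h5 hu2b
      · exact absurd h5 h12'
    · rcases hrel with h5 | h5 | h5
      · exact absurd h5.symm hv1'
      · exact absurd h5.symm hv2'
      · exact absurd h5.symm hw1'
    -- (u2,u1) vs *
    · rw [he1, he2] at hrel
      rcases hrel with h5 | h5 | h5
      · exact absurd h5 hau2.symm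
      · exact absurd h5 hanu1.symm
      · exact absurd h5 h12'.symm
    · rw [he1, he2] at hrel ⊢
      rw [hcu2u1, hcu1a]; exact L8.symm
    · rw [he1, he2] at hrel ⊢
      rw [hcu2u1, hcu1u2]; exact L9.symm
    · exact absurd (Prod.ext he1.symm he2.symm) hne
    · rw [he1, he2] at hrel ⊢
      rw [hcu2u1, hcu2b]; exact L11
    · rw [he1, he2] at hrel ⊢
      rw [hcu2u1, hcbu2]; exact L12
    · rcases hrel with h5 | h5 | h5
      · exact absurd h5.symm hv2'
      · exact absurd h5.symm hv1'
      · exact absurd h5.symm hw2'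
    -- (u2,b) vs *
    · rw [he1, he2] at hrel
      rcases hrel with h5 | h5 | h5
      · exact absurd h5 hau2.symm
      · exact absurd h5 hab.symm
      · exact absurd h5 h12'.symm
    · rw [he1, he2] at hrel
      rcases hrel with h5 | h5 | h5
      · exact absurd h5 h12'.symm
      · exact absurd h5 hbu1
      · exact absurd h5 hau2.symm
    · rw [he1, he2] at hrel ⊢
      rw [hcu2b, hcu1u2]; exact L10.symm
    · rw [he1, he2] at hrel ⊢
      rw [hcu2b, hcu2u1]; exact L11.symm
    · exact absurd (Prod.ext he1.symm he2.symm) hne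
    · rw [he1, he2] at hrel ⊢
      rw [hcu2b, hcbu2]; exact L15
    · rw [hcu2b, hold _ _ hv1' hv2' hw1' hw2']
      rcases hrel with rfl | rfl | rfl
      · exact absurd rfl hv2'
      · exact fun h => L13 (h ▸ mem_outS h3')
      · exact absurd rfl hw2'
    -- (b,u2) vs *
    · rw [he1, he2] at hrel
      rcases hrel with h5 | h5 | h5
      · exact absurd h5 hab.symm
      · exact absurd h5 hau2.symm
      · exact absurd h5 hbu1
    · rw [he1, he2] at hrel
      rcases hrel with h5 | h5 | h5
      · exact absurd h5 hbu1
      · exact absurd h5 h12'.symm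
      · exact absurd h5 hab.symm
    · rw [he1, he2] at hrel
      rcases hrel with h5 | h5 | h5
      · exact absurd h5 hbu1
      · exact absurd h5 h12'.symm
      · exact absurd h5 hu2b.symm
    · rw [he1, he2] at hrel ⊢
      rw [hcbu2, hcu2u1]; exact L12.symm
    · rw [he1, he2] at hrel ⊢
      rw [hcbu2, hcu2b]; exact L15.symm
    · exact absurd (Prod.ext he1.symm he2.symm) hne
    · rw [hcbu2, hold _ _ hv1' hv2' hw1' hw2']
      rcases hrel with rfl | rfl | rfl
      · exact fun h => L16 (h ▸ mem_outS h3')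
      · exact absurd rfl hv2'
      · exact fun h => L17 (h ▸ mem_inS h3')
    -- old vs *
    · rw [he1, he2] at hrel
      rw [he1, he2, hcau1, hold _ _ hv1 hv2 hw1 hw2]
      rcases hrel with rfl | rfl | rfl
      · exact fun h => L1 (h.symm ▸ mem_outS h3)
      · exact fun h => L2 (h.symm ▸ mem_inS h3)
      · exact absurd rfl hv1
    · rw [he1, he2] at hrel
      rw [he1, he2, hcu1a, hold _ _ hv1 hv2 hw1 hw2]
      rcases hrel with rfl | rfl | rfl
      · exact absurd rfl hv1
      · exact absurd rfl hw1
      · exact fun h => L5 (h.symm ▸ mem_outS h3)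
    · rw [he1, he2] at hrel
      rcases hrel with rfl | rfl | rfl
      · exact absurd rfl hv1
      · exact absurd rfl hw1
      · exact absurd rfl hv2
    · rw [he1, he2] at hrel
      rcases hrel with rfl | rfl | rfl
      · exact absurd rfl hv2
      · exact absurd rfl hw2
      · exact absurd rfl hv1
    · rw [he1, he2] at hrel
      rw [he1, he2, hcu2b, hold _ _ hv1 hv2 hw1 hw2]
      rcases hrel with rfl | rfl | rfl
      · exact absurd rfl hv2
      · exact absurd rfl hw2
      · exact fun h => L13 (h.symm ▸ mem_outS h3)
    · rw [he1, he2] at hrel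
      rw [he1, he2, hcbu2, hold _ _ hv1 hv2 hw1 hw2]
      rcases hrel with rfl | rfl | rfl
      · exact fun h => L16 (h.symm ▸ mem_outS h3)
      · exact fun h => L17 (h.symm ▸ mem_inS h3)
      · exact absurd rfl hv2
    · rw [hold _ _ hv1 hv2 hw1 hw2, hold _ _ hv1' hv2' hw1' hw2']
      exact P' v w v' w' h3 h3' hne hrel
  · -- the (·,2) condition
    intro v
    by_cases hv1 : v = u1
    · subst hv1
      have hset : {x : Fin k | ∃ t, G.Adj t v ∧ c t v = x} ⊆ {α, δ} := by
        rintro x ⟨t, ht, rfl⟩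
        have hmem : t ∈ G.neighborSet v := ht.symm
        rw [hnbr1] at hmem
        rcases hmem with rfl | rfl
        · left; exact hcau1
        · right; exact hcu2u1
      calc _ ≤ ({α, δ} : Set (Fin k)).ncard := Set.ncard_le_ncard hset (Set.toFinite _)
        _ ≤ 2 := by
            apply le_trans (Set.ncard_insert_le _ _); simp
    · by_cases hv2 : v = u2
      · subst hv2
        have hset : {x : Fin k | ∃ t, G.Adj t v ∧ c t v = x} ⊆ {γ, ζ} := by
          rintro x ⟨t, ht, rfl⟩
          have hmem : t ∈ G.neighborSet v := ht.symm
          rw [hnbr2] at hmem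
          rcases hmem with rfl | rfl
          · left; exact hcu1u2
          · right; exact hcbu2
        calc _ ≤ ({γ, ζ} : Set (Fin k)).ncard := Set.ncard_le_ncard hset (Set.toFinite _)
          _ ≤ 2 := by
              apply le_trans (Set.ncard_insert_le _ _); simp
      · by_cases hva : v = a
        · subst hva
          have hset : {x : Fin k | ∃ t, G.Adj t v ∧ c t v = x} = Sa ∪ {β} := by
            ext x
            simp only [Set.mem_setOf_eq, Set.mem_union, Set.mem_singleton_iff]
            constructor
            · rintro ⟨t, ht, rfl⟩
              by_cases ht1 : t = u1
              · subst ht1; right; exact hcu1a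
              · have ht2 : t ≠ u2 := by
                  rintro rfl; exact hanb2 ht
                left
                rw [hold _ _ ht1 ht2 hanu1 hau2]
                exact mem_inS ⟨ht, by rintro (h | h); exacts [ht1 h, ht2 h], haR⟩
            · rintro (⟨t, ht, rfl⟩ | rfl)
              · refine ⟨t, ht.1, ?_⟩
                have ht1 : t ≠ u1 := fun h => ht.2.1 (by rw [h]; left; rfl)
                have ht2 : t ≠ u2 := fun h => ht.2.1 (by rw [h]; right; rfl)
                exact hold _ _ ht1 ht2 hanu1 hau2
              · exact ⟨u1, hau.symm, hcu1a⟩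
          rw [hset]; exact L6
        · by_cases hvb : v = b
          · subst hvb
            have hset : {x : Fin k | ∃ t, G.Adj t v ∧ c t v = x} = Sb ∪ {ε} := by
              ext x
              simp only [Set.mem_setOf_eq, Set.mem_union, Set.mem_singleton_iff]
              constructor
              · rintro ⟨t, ht, rfl⟩
                by_cases ht2 : t = u2
                · subst ht2; right; exact hcu2b
                · have ht1 : t ≠ u1 := by
                    rintro rfl; exact hbnb1 ht
                  left
                  rw [hold _ _ ht1 ht2 hbu1 hu2b.symm]
                  exact mem_inS ⟨ht, by rintro (h | h); exacts [ht1 h, ht2 h], hbR⟩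
              · rintro (⟨t, ht, rfl⟩ | rfl)
                · refine ⟨t, ht.1, ?_⟩
                  have ht1 : t ≠ u1 := fun h => ht.2.1 (by rw [h]; left; rfl)
                  have ht2 : t ≠ u2 := fun h => ht.2.1 (by rw [h]; right; rfl)
                  exact hold _ _ ht1 ht2 hbu1 hu2b.symm
                · exact ⟨u2, hub, hcu2b⟩
            rw [hset]; exact L14
          · have hset : {x : Fin k | ∃ t, G.Adj t v ∧ c t v = x} =
                inS (cut G {u1, u2}) c' v := by
              ext x
              simp only [Set.mem_setOf_eq]
              constructor
              · rintro ⟨t, ht, rfl⟩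
                have ht1 : t ≠ u1 := by
                  rintro rfl
                  have hmem : v ∈ G.neighborSet t := ht
                  rw [hnbr1] at hmem
                  rcases hmem with rfl | rfl
                  · exact hva rfl
                  · exact hv2 rfl
                have ht2 : t ≠ u2 := by
                  rintro rfl
                  have hmem : v ∈ G.neighborSet t := ht
                  rw [hnbr2] at hmem
                  rcases hmem with rfl | rfl
                  · exact hv1 rfl
                  · exact hvb rfl
                rw [hold _ _ ht1 ht2 hv1 hv2]
                refine mem_inS ⟨ht, ?_, ?_⟩
                · rintro (h | h); exacts [ht1 h, ht2 h]
                · rintro (h | h); exacts [hv1 h, hv2 h]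
              · rintro ⟨t, ht, rfl⟩
                refine ⟨t, ht.1, ?_⟩
                have ht1 : t ≠ u1 := fun h => ht.2.1 (by rw [h]; left; rfl)
                have ht2 : t ≠ u2 := fun h => ht.2.1 (by rw [h]; right; rfl)
                exact hold _ _ ht1 ht2 hv1 hv2
            rw [hset]; exact hc'.2 v

/-- structure of one-page graphs with no degree-1 vertex -/
lemma structure_lemma [Fintype V] {G : SimpleGraph V} (f : V → ℝ) (hinj : Function.Injective f)
    (hcr : ∀ a b c d, G.Adj a b → G.Adj c d → ¬(f a < f c ∧ f c < f b ∧ f b < f d))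
    (hdeg : ∀ v, (G.neighborSet v).ncard ≠ 1)
    (hedge : ∃ x y, G.Adj x y) :
    (∃ u x y, G.Adj x u ∧ G.Adj u y ∧ G.Adj x y ∧ (G.neighborSet u).ncard = 2
        ∧ f x < f u ∧ f u < f y) ∨
    (∃ u1 u2 x y, G.Adj x u1 ∧ G.Adj u1 u2 ∧ G.Adj u2 y
        ∧ (G.neighborSet u1).ncard = 2 ∧ (G.neighborSet u2).ncard = 2
        ∧ f x < f u1 ∧ f u1 < f u2 ∧ f u2 < f y) := by
  classical
  set W : Set V := {v | ∃ t, G.Adj v t} with hWdef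
  have hW_of_adj : ∀ {v t : V}, G.Adj v t → v ∈ W := fun h => ⟨_, h⟩
  have htwo : ∀ v ∈ W, ∃ p q, G.Adj v p ∧ G.Adj v q ∧ p ≠ q := by
    rintro v ⟨t, ht⟩
    have h1 : 0 < (G.neighborSet v).ncard := (Set.ncard_pos (Set.toFinite _)).mpr ⟨t, ht⟩
    have h2 : 1 < (G.neighborSet v).ncard := by
      rcases Nat.lt_or_ge 1 ((G.neighborSet v).ncard) with h | h
      · exact h
      · exact absurd (le_antisymm h h1) (hdeg v)
    rw [Set.one_lt_ncard (Set.toFinite _)] at h2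
    obtain ⟨p, hp, q, hq, hpq⟩ := h2
    exact ⟨p, q, hp, hq, hpq⟩
  have hne_f : ∀ {v t : V}, G.Adj v t → f v ≠ f t := fun h h' => h.ne (hinj h')
  -- the inside lemma
  have hinside : ∀ {x y w w' : V}, G.Adj x y → G.Adj w w' → f x < f w → f w < f y →
      f x ≤ f w' ∧ f w' ≤ f y := by
    intro x y w w' hxy hww' h1 h2
    constructor
    · by_contra h3
      push_neg at h3
      exact hcr w' w x y hww'.symm hxy ⟨h3, h1, h2⟩
    · by_contra h3
      push_neg at h3
      exact hcr x y w w' hxy hww' ⟨h1, h2, h3⟩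
  set B : V → V → Set V := fun p q => {v | v ∈ W ∧ f p < f v ∧ f v < f q} with hBdef
  set nn : V → V → ℕ := fun p q => (B p q).ncard with hnndef
  set P : Set (V × V) := {e | G.Adj e.1 e.2 ∧ f e.1 < f e.2 ∧ 0 < nn e.1 e.2} with hPdef
  -- P is nonempty
  have hPne : P.Nonempty := by
    obtain ⟨x1, y1, hx1y1⟩ := hedge
    have hWne : W.Nonempty := ⟨x1, hW_of_adj hx1y1⟩
    obtain ⟨x0, hx0, hx0min⟩ := Set.exists_min_image W f (Set.toFinite _) hWne
    obtain ⟨p, q, hp, hq, hpq⟩ := htwo x0 hx0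
    have hpW : p ∈ W := hW_of_adj hp.symm
    have hqW : q ∈ W := hW_of_adj hq.symm
    have hx0p : f x0 < f p := lt_of_le_of_ne (hx0min p hpW) (hne_f hp)
    have hx0q : f x0 < f q := lt_of_le_of_ne (hx0min q hqW) (hne_f hq)
    have hfpq : f p ≠ f q := fun h => hpq (hinj h)
    rcases lt_or_gt_of_ne hfpq with h | h
    · exact ⟨(x0, q), hq, hx0q, (Set.ncard_pos (Set.toFinite _)).mpr ⟨p, hpW, hx0p, h⟩⟩
    · exact ⟨(x0, p), hp, hx0p, (Set.ncard_pos (Set.toFinite _)).mpr ⟨q, hqW, hx0q, h⟩⟩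
  obtain ⟨⟨x, y⟩, hxyP, hmin⟩ := Set.exists_min_image P (fun e => nn e.1 e.2)
    (Set.toFinite _) hPne
  obtain ⟨hxy, hfxy, hnnpos⟩ := hxyP
  -- every edge with an endpoint strictly inside (x,y) has no W-vertex strictly inside it
  have hIlem : ∀ {w : V}, w ∈ W → f x < f w → f w < f y →
      ∀ {w' : V}, G.Adj w w' → f x ≤ f w' ∧ f w' ≤ f y := by
    intro w hw h1 h2 w' hww'
    exact hinside hxy hww' h1 h2
  have hconsec : ∀ p q : V, G.Adj p q → f p < f q →
      ((p ∈ W ∧ f x < f p ∧ f p < f y) ∨ (q ∈ W ∧ f x < f q ∧ f q < f y)) →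
      nn p q = 0 := by
    intro p q hpq hfpq hin
    by_contra h0
    have hpos : 0 < nn p q := Nat.pos_of_ne_zero h0
    have hPmem : (p, q) ∈ P := ⟨hpq, hfpq, hpos⟩
    have hge : nn x y ≤ nn p q := hmin (p, q) hPmem
    -- show B p q ⊂ B x y
    have hxp : f x ≤ f p ∧ f p ≤ f y := by
      rcases hin with ⟨hw, h1, h2⟩ | ⟨hw, h1, h2⟩
      · exact ⟨le_of_lt h1, le_of_lt h2⟩
      · have := hIlem hw h1 h2 hpq.symm
        exact this
    have hxq : f x ≤ f q ∧ f q ≤ f y := by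
      rcases hin with ⟨hw, h1, h2⟩ | ⟨hw, h1, h2⟩
      · exact hIlem hw h1 h2 hpq
      · exact ⟨le_of_lt h1, le_of_lt h2⟩
    have hsub : B p q ⊆ B x y := by
      rintro v ⟨hv, h1, h2⟩
      exact ⟨hv, lt_of_le_of_lt hxp.1 h1, lt_of_lt_of_le h2 hxq.2⟩
    have hwit : ∃ v, v ∈ B x y ∧ v ∉ B p q := by
      rcases hin with ⟨hw, h1, h2⟩ | ⟨hw, h1, h2⟩
      · exact ⟨p, ⟨hw, h1, h2⟩, fun h => absurd h.2.1 (lt_irrefl _)⟩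
      · exact ⟨q, ⟨hw, h1, h2⟩, fun h => absurd h.2.2 (lt_irrefl _)⟩
    obtain ⟨v, hv1, hv2⟩ := hwit
    have hss : B p q ⊂ B x y := ⟨hsub, fun h => hv2 (h hv1)⟩
    have hlt2 := Set.ncard_lt_ncard hss (Set.toFinite _)
    have hge' : (B x y).ncard ≤ (B p q).ncard := by simpa [hnndef] using hge
    omega
  -- w1 : the minimum of B x y
  have hBne : (B x y).Nonempty := by
    rw [← Set.ncard_pos (Set.toFinite _)]
    exact hnnpos
  obtain ⟨w1, hw1B, hw1min⟩ := Set.exists_min_image (B x y) f (Set.toFinite _) hBne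
  obtain ⟨hw1W, hxw1, hw1y⟩ := hw1B
  -- analyze neighbors of a vertex m ∈ B x y whose left-neighbors are all lm
  -- generic claim : all neighbors of m are in [x,y]
  have hnbr_range : ∀ {m r : V}, m ∈ W → f x < f m → f m < f y → G.Adj m r →
      f x ≤ f r ∧ f r ≤ f y := by
    intro m r hm h1 h2 hmr
    exact hinside hxy hmr h1 h2
  -- at most one right-neighbor
  have hright_unique : ∀ {m r r' : V}, m ∈ W → f x < f m → f m < f y →
      G.Adj m r → G.Adj m r' → f m < f r → f m < f r' → r = r' := by
    intro m r r' hm h1 h2 hr hr' hfr hfr'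
    by_contra hne
    have hfne : f r ≠ f r' := fun h => hne (hinj h)
    rcases lt_or_gt_of_ne hfne with h | h
    · have h0 : nn m r' = 0 := hconsec m r' hr' hfr' (Or.inl ⟨hm, h1, h2⟩)
      have h0' : (B m r').ncard = 0 := by simpa [hnndef] using h0
      have hmem : r ∈ B m r' := ⟨hW_of_adj hr.symm, hfr, h⟩
      have := (Set.ncard_pos (Set.toFinite _)).mpr ⟨r, hmem⟩
      omega
    · have h0 : nn m r = 0 := hconsec m r hr hfr (Or.inl ⟨hm, h1, h2⟩)
      have h0' : (B m r).ncard = 0 := by simpa [hnndef] using h0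
      have hmem : r' ∈ B m r := ⟨hW_of_adj hr'.symm, hfr', h⟩
      have := (Set.ncard_pos (Set.toFinite _)).mpr ⟨r', hmem⟩
      omega
  -- left neighbors of w1 are x
  have hleft_w1 : ∀ {r : V}, G.Adj w1 r → f r < f w1 → r = x := by
    intro r hr hfr
    by_contra hne
    have hrange := hnbr_range hw1W hxw1 hw1y hr
    have hfxr : f x < f r := lt_of_le_of_ne hrange.1 (fun h => hne (hinj h.symm))
    have hrB : r ∈ B x y := ⟨hW_of_adj hr.symm, hfxr, lt_trans hfr hw1y⟩
    have := hw1min r hrB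
    have := hfr
    linarith
  -- w1 has a neighbor x and a right-neighbor r1
  obtain ⟨p, q, hp, hq, hpq⟩ := htwo w1 hw1W
  have hnbrs_w1 : ∃ r1, G.Adj w1 x ∧ G.Adj w1 r1 ∧ f w1 < f r1 := by
    have hcases : ∀ s : V, G.Adj w1 s → s = x ∨ f w1 < f s := by
      intro s hs
      rcases lt_trichotomy (f s) (f w1) with h | h | h
      · exact Or.inl (hleft_w1 hs h)
      · exact absurd (hinj h) hs.ne'
      · exact Or.inr h
    rcases hcases p hp with rfl | hfp
    · rcases hcases q hq with rfl | hfq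
      · exact absurd rfl hpq
      · exact ⟨q, hp, hq, hfq⟩
    · rcases hcases q hq with rfl | hfq
      · exact ⟨p, hq, hp, hfp⟩
      · exact absurd (hright_unique hw1W hxw1 hw1y hp hq hfp hfq) hpq
  obtain ⟨r1, hw1x, hw1r1, hfr1⟩ := hnbrs_w1
  have hxr1 : x ≠ r1 := fun h => by
    rw [← h] at hfr1; exact absurd (lt_trans hxw1 hfr1) (lt_irrefl _)
  have hnbr1 : G.neighborSet w1 = {x, r1} := by
    apply Set.eq_of_subset_of_ncard_le _ _ (Set.toFinite _)
    · intro s hs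
      have hs' : G.Adj w1 s := hs
      rcases lt_trichotomy (f s) (f w1) with h | h | h
      · left; exact hleft_w1 hs' h
      · exact absurd (hinj h) hs'.ne'
      · right; exact hright_unique hw1W hxw1 hw1y hs' hw1r1 h hfr1
    · rw [Set.ncard_pair hxr1]
      have h1 : 0 < (G.neighborSet w1).ncard :=
        (Set.ncard_pos (Set.toFinite _)).mpr ⟨x, hw1x⟩
      have h2 := hdeg w1
      omega
  have hdw1 : (G.neighborSet w1).ncard = 2 := by
    rw [hnbr1, Set.ncard_pair hxr1]
  have hr1y : f r1 ≤ f y := (hnbr_range hw1W hxw1 hw1y hw1r1).2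
  rcases eq_or_lt_of_le hr1y with heq | hlt
  · -- r1 = y : the triangle configuration
    have hr1y' : r1 = y := hinj heq
    subst hr1y'
    exact Or.inl ⟨w1, x, r1, hw1x.symm, hw1r1, hxy, hdw1, hxw1, hfr1⟩
  · -- r1 is interior : two adjacent degree-2 vertices
    have hr1W : r1 ∈ W := hW_of_adj hw1r1.symm
    have hxr1' : f x < f r1 := lt_trans hxw1 hfr1
    -- left neighbors of r1 are w1
    have hleft_r1 : ∀ {s : V}, G.Adj r1 s → f s < f r1 → s = w1 := by
      intro s hs hfs
      by_contra hne
      have hrange := hnbr_range hr1W hxr1' hlt hs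
      have hfsw : f s ≠ f w1 := fun h => hne (hinj h)
      rcases lt_or_gt_of_ne hfsw with h | h
      · -- s < w1 < r1 : w1 is a W-vertex inside edge (s, r1)
        have h0 : nn s r1 = 0 := hconsec s r1 hs.symm (lt_trans h hfr1)
          (Or.inr ⟨hr1W, hxr1', hlt⟩)
        have h0' : (B s r1).ncard = 0 := by simpa [hnndef] using h0
        have hmem : w1 ∈ B s r1 := ⟨hw1W, h, hfr1⟩
        have := (Set.ncard_pos (Set.toFinite _)).mpr ⟨w1, hmem⟩
        omega
      · -- w1 < s < r1 : s is a W-vertex inside edge (w1, r1)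
        have h0 : nn w1 r1 = 0 := hconsec w1 r1 hw1r1 hfr1 (Or.inl ⟨hw1W, hxw1, hw1y⟩)
        have h0' : (B w1 r1).ncard = 0 := by simpa [hnndef] using h0
        have hmem : s ∈ B w1 r1 := ⟨hW_of_adj hs.symm, h, hfs⟩
        have := (Set.ncard_pos (Set.toFinite _)).mpr ⟨s, hmem⟩
        omega
    obtain ⟨p2, q2, hp2, hq2, hpq2⟩ := htwo r1 hr1W
    have hnbrs_r1 : ∃ r2, G.Adj r1 r2 ∧ f r1 < f r2 := by
      have hcases : ∀ s : V, G.Adj r1 s → s = w1 ∨ f r1 < f s := by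
        intro s hs
        rcases lt_trichotomy (f s) (f r1) with h | h | h
        · exact Or.inl (hleft_r1 hs h)
        · exact absurd (hinj h) hs.ne'
        · exact Or.inr h
      rcases hcases p2 hp2 with rfl | hfp
      · rcases hcases q2 hq2 with rfl | hfq
        · exact absurd rfl hpq2
        · exact ⟨q2, hq2, hfq⟩
      · exact ⟨p2, hp2, hfp⟩
    obtain ⟨r2, hr1r2, hfr2⟩ := hnbrs_r1
    have hw1r2 : w1 ≠ r2 := fun h => by
      rw [← h] at hfr2; exact absurd (lt_trans hfr1 hfr2) (lt_irrefl _)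
    have hnbr2 : G.neighborSet r1 = {w1, r2} := by
      apply Set.eq_of_subset_of_ncard_le _ _ (Set.toFinite _)
      · intro s hs
        have hs' : G.Adj r1 s := hs
        rcases lt_trichotomy (f s) (f r1) with h | h | h
        · left; exact hleft_r1 hs' h
        · exact absurd (hinj h) hs'.ne'
        · right; exact hright_unique hr1W hxr1' hlt hs' hr1r2 h hfr2
      · rw [Set.ncard_pair hw1r2]
        have h1 : 0 < (G.neighborSet r1).ncard :=
          (Set.ncard_pos (Set.toFinite _)).mpr ⟨r2, hr1r2⟩
        have h2 := hdeg r1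
        omega
    have hdr1 : (G.neighborSet r1).ncard = 2 := by
      rw [hnbr2, Set.ncard_pair hw1r2]
    exact Or.inr ⟨w1, r1, x, r2, hw1x.symm, hw1r1, hr1r2, hdw1, hdr1, hxw1, hfr1, hfr2⟩

lemma edge_ncard_lt [Fintype V] {G : SimpleGraph V} {R : Set V} {u a : V}
    (hu : u ∈ R) (ha : G.Adj u a) :
    (cut G R).edgeSet.ncard < G.edgeSet.ncard := by
  apply Set.ncard_lt_ncard _ (Set.toFinite _)
  constructor
  · exact SimpleGraph.edgeSet_mono (cut_le G R)
  · intro hsub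
    have h1 : s(u, a) ∈ G.edgeSet := ha
    have h2 := hsub h1
    rw [SimpleGraph.mem_edgeSet, cut_adj] at h2
    exact h2.2.1 hu

lemma cut_deg_le [Fintype V] {G : SimpleGraph V} (R : Set V) (v : V) :
    ((cut G R).neighborSet v).ncard ≤ (G.neighborSet v).ncard := by
  apply Set.ncard_le_ncard _ (Set.toFinite _)
  exact fun t ht => ht.1

lemma aux [Fintype V] (k : ℕ) (m : ℕ) : ∀ (G : SimpleGraph V), G.edgeSet.ncard = m →
    Outerplanar G → (∀ v, (G.neighborSet v).ncard + 2 ≤ k) → HasIncColoring G k 2 := by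
  induction m using Nat.strong_induction_on with
  | _ m IH =>
    intro G hm hout hk
    rcases Nat.eq_zero_or_pos m with rfl | hpos
    · -- no edges
      have hempty : ∀ v w, ¬ G.Adj v w := by
        intro v w hvw
        have hme : s(v, w) ∈ G.edgeSet := hvw
        have he : G.edgeSet = ∅ := by
          rw [← Set.ncard_eq_zero (Set.toFinite _)]
          exact hm
        rw [he] at hme
        exact hme
      cases isEmpty_or_nonempty V with
      | inl hV =>
        exact ⟨fun v _ => isEmptyElim v, fun v w v' w' h => isEmptyElim v,
          fun v => isEmptyElim v⟩
      | inr hV =>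
        obtain ⟨v0⟩ := hV
        have hk2 : 0 < k := by have := hk v0; omega
        refine ⟨fun _ _ => ⟨0, hk2⟩, fun v w v' w' h => absurd h (hempty v w), fun v => ?_⟩
        have hset : {x : Fin k | ∃ u, G.Adj u v ∧ (fun _ _ => (⟨0, hk2⟩ : Fin k)) u v = x} = ∅ := by
          ext x; simp only [Set.mem_setOf_eq, Set.mem_empty_iff_false, iff_false]
          rintro ⟨u, hu, _⟩; exact hempty u v hu
        rw [hset]; simp
    · -- at least one edge
      have hedge : ∃ x y, G.Adj x y := by
        have hne : G.edgeSet.Nonempty := by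
          rw [← Set.ncard_pos (Set.toFinite _)]; omega
        obtain ⟨e, he⟩ := hne
        induction e with
        | h x y => exact ⟨x, y, he⟩
      by_cases h1 : ∃ u, (G.neighborSet u).ncard = 1
      · obtain ⟨u, hu⟩ := h1
        have hne : (G.neighborSet u).Nonempty := by
          rw [← Set.ncard_pos (Set.toFinite _)]; omega
        obtain ⟨a, ha⟩ := hne
        have ha' : G.Adj u a := ha
        have hlt : (cut G {u}).edgeSet.ncard < m := by
          rw [← hm]; exact edge_ncard_lt rfl ha'
        refine ext1 ha' hu hk ?_
        exact IH _ hlt _ rfl (outerplanar_cut hout _)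
          (fun v => le_trans (by have := cut_deg_le (G := G) {u} v; omega) (hk v))
      · push_neg at h1
        obtain ⟨f, hinj, hcr⟩ := hout
        rcases structure_lemma f hinj hcr h1 hedge with
          ⟨u, x, y, hxu, huy, hxy, hd, _, _⟩ |
          ⟨u1, u2, x, y, hxu, h12, huy, hb1, hb2, o1, o2, o3⟩
        · have hlt : (cut G {u}).edgeSet.ncard < m := by
            rw [← hm]; exact edge_ncard_lt rfl huy
          refine ext2 hxu huy hxy hd hk ?_
          exact IH _ hlt _ rfl (outerplanar_cut ⟨f, hinj, hcr⟩ _)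
            (fun v => le_trans (by have := cut_deg_le (G := G) {u} v; omega) (hk v))
        · have hxy' : x ≠ y := fun h => by
            subst h; exact absurd (lt_trans (lt_trans o1 o2) o3) (lt_irrefl _)
          have hxu2 : x ≠ u2 := fun h => by
            subst h; exact absurd (lt_trans o1 o2) (lt_irrefl _)
          have hyu1 : y ≠ u1 := fun h => by
            subst h; exact absurd (lt_trans o2 o3) (lt_irrefl _)
          have hlt : (cut G {u1, u2}).edgeSet.ncard < m := by
            rw [← hm]
            exact edge_ncard_lt (Set.mem_insert _ _) h12
          refine ext3 hxu h12 huy hb1 hb2 hxy' hxu2 hyu1 hk ?_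
          exact IH _ hlt _ rfl (outerplanar_cut ⟨f, hinj, hcr⟩ _)
            (fun v => le_trans (by have := cut_deg_le (G := G) {u1, u2} v; omega) (hk v))

end IncAux

/-- Every simple outerplanar graph admits a (Δ+2, 2)-incidence coloring. -/
theorem stmt_1 {V : Type*} [Fintype V] (G : SimpleGraph V) [DecidableRel G.Adj]
    (hout : Outerplanar G) : HasIncColoring G (G.maxDegree + 2) 2 := by
  apply IncAux.aux (G.maxDegree + 2) (G.edgeSet.ncard) G rfl hout
  intro v
  have h1 : (G.neighborSet v).ncard = G.degree v := by
    rw [← SimpleGraph.card_neighborSet_eq_degree]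
    rw [← Nat.card_eq_fintype_card, Nat.card_coe_set_eq]
  rw [h1]
  have := G.degree_le_maxDegree v
  omega
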